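/- arXiv:0908.2790 — 6 statements merged into one kernel-verified Lean document; each statement's English description precedes it below -/
import Mathlib

section
/- In the tensor product ⨂_{j=0}^{n-1} M₂(ℂ) with normalized trace, let x = [[0,√2],[0,0]] and y = x*. For 1 ≤ i ≤ n−1 define aᵢ = x^{⊗(i+1)} ⊗ 1^{⊗(n−1−i)} and bᵢ = 1^{⊗(i+1)} ⊗ y ⊗ 1^{⊗(n−2−i)}. Then ‖aᵢ‖₂ = ‖bᵢ‖₂ = 1 for all i, ‖[aᵢ, b_j]‖₂ = 0 whenever i ≤ j, and ‖[aᵢ, b_j]‖₂ = 2 whenever i > j. -/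
open Matrix

/-- The elementary tensor `⨂_{j<n} f j` in `⨂_{j<n} M₂(ℂ) ≅ M_{2ⁿ}(ℂ)`, realized as a
matrix indexed by `Fin n → Fin 2`. -/
noncomputable def elemTensor (n : ℕ) (f : Fin n → Matrix (Fin 2) (Fin 2) ℂ) :
    Matrix (Fin n → Fin 2) (Fin n → Fin 2) ℂ :=
  Matrix.of fun r c => ∏ j, f j (r j) (c j)

/-- ℓ²-norm on `M_{2ⁿ}(ℂ)` w.r.t. the normalized trace. -/
noncomputable def l2normPow (n : ℕ) (a : Matrix (Fin n → Fin 2) (Fin n → Fin 2) ℂ) : ℝ :=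
  Real.sqrt ((Matrix.trace (aᴴ * a) / (2 ^ n : ℂ)).re)

lemma elemTensor_mul (n : ℕ) (f g : Fin n → Matrix (Fin 2) (Fin 2) ℂ) :
    elemTensor n f * elemTensor n g = elemTensor n (fun j => f j * g j) := by
  ext r c
  simp only [elemTensor, Matrix.mul_apply, Matrix.of_apply, Finset.prod_univ_sum,
    Fintype.piFinset_univ, Finset.prod_mul_distrib]

lemma elemTensor_conjT (n : ℕ) (f : Fin n → Matrix (Fin 2) (Fin 2) ℂ) :
    (elemTensor n f)ᴴ = elemTensor n (fun j => (f j)ᴴ) := by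
  ext r c
  simp [elemTensor, Matrix.conjTranspose_apply, star_prod]

lemma trace_elemTensor (n : ℕ) (f : Fin n → Matrix (Fin 2) (Fin 2) ℂ) :
    (elemTensor n f).trace = ∏ j, (f j).trace := by
  simp only [Matrix.trace, Matrix.diag, elemTensor, Matrix.of_apply, Finset.prod_univ_sum,
    Fintype.piFinset_univ]

lemma trace_elemTensor_mulCT (n : ℕ) (f g : Fin n → Matrix (Fin 2) (Fin 2) ℂ) :
    ((elemTensor n f)ᴴ * elemTensor n g).trace = ∏ j, ((f j)ᴴ * g j).trace := by
  rw [elemTensor_conjT, elemTensor_mul, trace_elemTensor]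

theorem stmt1 (n : ℕ) (hn : 2 ≤ n)
    (x y : Matrix (Fin 2) (Fin 2) ℂ)
    (hx : x = !![0, (Real.sqrt 2 : ℂ); 0, 0]) (hy : y = xᴴ)
    (a b : ℕ → Matrix (Fin n → Fin 2) (Fin n → Fin 2) ℂ)
    (ha : ∀ i, a i = elemTensor n (fun k => if (k : ℕ) ≤ i then x else 1))
    (hb : ∀ i, b i = elemTensor n (fun k => if (k : ℕ) = i + 1 then y else 1)) :
    ∀ i j, 1 ≤ i → i ≤ n - 1 → 1 ≤ j → j ≤ n - 1 →
      l2normPow n (a i) = 1 ∧ l2normPow n (b i) = 1 ∧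
      (i ≤ j → l2normPow n (a i * b j - b j * a i) = 0) ∧
      (j < i → l2normPow n (a i * b j - b j * a i) = 2) := by
  -- 2×2 arithmetic facts
  have hxc : xᴴ = !![0, 0; (Real.sqrt 2 : ℂ), 0] := by
    subst hx; ext i j; fin_cases i <;> fin_cases j <;>
      simp [Matrix.conjTranspose_apply, Complex.ext_iff]
  have h2 : (Real.sqrt 2 : ℂ) * (Real.sqrt 2 : ℂ) = 2 := by
    rw [← Complex.ofReal_mul, Real.mul_self_sqrt (by norm_num)]; norm_num
  have h1 : (xᴴ * x).trace = 2 := by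
    rw [hxc, hx, Matrix.mul_fin_two]; simp [Matrix.trace_fin_two_of, h2]
  have hxy : x * y = !![2, 0; 0, 0] := by
    rw [hy, hxc, hx, Matrix.mul_fin_two]; simp [h2]
  have hyx : y * x = !![0, 0; 0, 2] := by
    rw [hy, hxc, hx, Matrix.mul_fin_two]; simp [h2]
  have hxyc : (x*y)ᴴ = x*y := by
    rw [hxy]; ext i j; fin_cases i <;> fin_cases j <;> simp
  have hyxc : (y*x)ᴴ = y*x := by
    rw [hyx]; ext i j; fin_cases i <;> fin_cases j <;> simp
  have h3 : ((x*y)ᴴ * (x*y)).trace = 4 := by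
    rw [hxyc, hxy, Matrix.mul_fin_two]; simp [Matrix.trace_fin_two_of]; norm_num
  have h4 : ((y*x)ᴴ * (y*x)).trace = 4 := by
    rw [hyxc, hyx, Matrix.mul_fin_two]; simp [Matrix.trace_fin_two_of]; norm_num
  have h5 : ((x*y)ᴴ * (y*x)).trace = 0 := by
    rw [hxyc, hxy, hyx, Matrix.mul_fin_two]; simp [Matrix.trace_fin_two_of]
  have h6 : ((y*x)ᴴ * (x*y)).trace = 0 := by
    rw [hyxc, hyx, hxy, Matrix.mul_fin_two]; simp [Matrix.trace_fin_two_of]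
  have h7 : (yᴴ * y).trace = 2 := by
    rw [hy, Matrix.conjTranspose_conjTranspose, hxc, hx, Matrix.mul_fin_two]
    simp [Matrix.trace_fin_two_of, h2]
  have htr1 : ((1 : Matrix (Fin 2) (Fin 2) ℂ)ᴴ * 1).trace = 2 := by
    simp [Matrix.trace_one]
  have hpowne : (2 : ℂ) ^ n ≠ 0 := pow_ne_zero _ two_ne_zero
  intro i j hi1 hi2 hj1 hj2
  have hiLt : i < n := by omega
  constructor
  · -- ‖a i‖₂ = 1
    have ht : ((a i)ᴴ * a i).trace = 2 ^ n := by
      rw [ha, trace_elemTensor_mulCT]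
      calc ∏ k : Fin n, ((if (k:ℕ) ≤ i then x else 1)ᴴ * (if (k:ℕ) ≤ i then x else 1)).trace
          = ∏ _k : Fin n, (2:ℂ) :=
            Finset.prod_congr rfl (fun k _ => by split_ifs with h; exacts [h1, htr1])
        _ = 2 ^ n := by rw [Finset.prod_const, Finset.card_univ, Fintype.card_fin]
    rw [l2normPow, ht, div_self hpowne, Complex.one_re, Real.sqrt_one]
  constructor
  · -- ‖b i‖₂ = 1
    have ht : ((b i)ᴴ * b i).trace = 2 ^ n := by
      rw [hb, trace_elemTensor_mulCT]
      calc ∏ k : Fin n, ((if (k:ℕ) = i+1 then y else 1)ᴴ * (if (k:ℕ) = i+1 then y else 1)).trace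
          = ∏ _k : Fin n, (2:ℂ) :=
            Finset.prod_congr rfl (fun k _ => by split_ifs with h; exacts [h7, htr1])
        _ = 2 ^ n := by rw [Finset.prod_const, Finset.card_univ, Fintype.card_fin]
    rw [l2normPow, ht, div_self hpowne, Complex.one_re, Real.sqrt_one]
  constructor
  · -- commuting case
    intro hij
    have hcomm : a i * b j = b j * a i := by
      rw [ha, hb, elemTensor_mul, elemTensor_mul]
      refine congrArg (elemTensor n) (funext fun k => ?_)
      by_cases hk : (k:ℕ) = j + 1
      · have hki : ¬ (j + 1 ≤ i) := by omega
        simp [hk, hki]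
      · simp [hk]
    rw [hcomm, sub_self]
    simp [l2normPow]
  · -- noncommuting case
    intro hji
    have hjLt : j + 1 < n := by omega
    set k0 : Fin n := ⟨j+1, hjLt⟩ with hk0
    have hk0v : (k0 : ℕ) = j + 1 := rfl
    set p : Fin n → Matrix (Fin 2) (Fin 2) ℂ :=
      fun k => if (k:ℕ) = j+1 then x*y else if (k:ℕ) ≤ i then x else 1 with hp
    set q : Fin n → Matrix (Fin 2) (Fin 2) ℂ :=
      fun k => if (k:ℕ) = j+1 then y*x else if (k:ℕ) ≤ i then x else 1 with hq
    have hab : a i * b j = elemTensor n p := by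
      rw [ha, hb, elemTensor_mul]
      refine congrArg (elemTensor n) (funext fun k => ?_)
      by_cases hk : (k:ℕ) = j + 1
      · have hki : j + 1 ≤ i := by omega
        simp [hp, hk, hki]
      · by_cases hki : (k:ℕ) ≤ i <;> simp [hp, hk, hki]
    have hba : b j * a i = elemTensor n q := by
      rw [ha, hb, elemTensor_mul]
      refine congrArg (elemTensor n) (funext fun k => ?_)
      by_cases hk : (k:ℕ) = j + 1
      · have hki : j + 1 ≤ i := by omega
        simp [hq, hk, hki]
      · by_cases hki : (k:ℕ) ≤ i <;> simp [hq, hk, hki]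
    have hne : ∀ k : Fin n, k ≠ k0 → (k:ℕ) ≠ j + 1 := by
      intro k hkk h
      exact hkk (Fin.ext (by rw [h, hk0v]))
    have hslot2 : ∀ (k : Fin n), (k:ℕ) ≠ j+1 → ((p k)ᴴ * p k).trace = 2 ∧
        ((q k)ᴴ * q k).trace = 2 := by
      intro k hk
      constructor <;> (simp only [hp, hq, if_neg hk]; split_ifs with h; exacts [h1, htr1])
    have hPP : ∏ k : Fin n, ((p k)ᴴ * p k).trace = 4 * 2 ^ (n-1) := by
      rw [← Finset.mul_prod_erase _ _ (Finset.mem_univ k0)]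
      have : p k0 = x * y := by simp [hp, hk0v]
      rw [this, h3]
      congr 1
      rw [Finset.prod_congr rfl
          (fun k hk => ((hslot2 k (hne k (Finset.mem_erase.mp hk).1)).1 : _)),
        Finset.prod_const, Finset.card_erase_of_mem (Finset.mem_univ k0),
        Finset.card_univ, Fintype.card_fin]
    have hQQ : ∏ k : Fin n, ((q k)ᴴ * q k).trace = 4 * 2 ^ (n-1) := by
      rw [← Finset.mul_prod_erase _ _ (Finset.mem_univ k0)]
      have : q k0 = y * x := by simp [hq, hk0v]
      rw [this, h4]
      congr 1
      rw [Finset.prod_congr rfl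
          (fun k hk => ((hslot2 k (hne k (Finset.mem_erase.mp hk).1)).2 : _)),
        Finset.prod_const, Finset.card_erase_of_mem (Finset.mem_univ k0),
        Finset.card_univ, Fintype.card_fin]
    have hPQ : ∏ k : Fin n, ((p k)ᴴ * q k).trace = 0 := by
      apply Finset.prod_eq_zero (Finset.mem_univ k0)
      have hpk : p k0 = x * y := by simp [hp, hk0v]
      have hqk : q k0 = y * x := by simp [hq, hk0v]
      rw [hpk, hqk, h5]
    have hQP : ∏ k : Fin n, ((q k)ᴴ * p k).trace = 0 := by
      apply Finset.prod_eq_zero (Finset.mem_univ k0)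
      have hpk : p k0 = x * y := by simp [hp, hk0v]
      have hqk : q k0 = y * x := by simp [hq, hk0v]
      rw [hpk, hqk, h6]
    have htr : ((a i * b j - b j * a i)ᴴ * (a i * b j - b j * a i)).trace
        = 8 * 2 ^ (n-1) := by
      rw [hab, hba]
      rw [Matrix.conjTranspose_sub, Matrix.sub_mul, Matrix.mul_sub, Matrix.mul_sub,
        Matrix.trace_sub, Matrix.trace_sub, Matrix.trace_sub,
        trace_elemTensor_mulCT, trace_elemTensor_mulCT, trace_elemTensor_mulCT,
        trace_elemTensor_mulCT, hPP, hQQ, hPQ, hQP]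
      ring
    have hdiv : ((8 * 2 ^ (n-1) : ℂ) / (2:ℂ) ^ n) = 4 := by
      have hn1 : n = (n-1) + 1 := by omega
      rw [hn1, pow_succ]
      have h2ne : ((2:ℂ) ^ (n-1)) ≠ 0 := pow_ne_zero _ two_ne_zero
      field_simp
      rw [Nat.add_sub_cancel]
      ring
    rw [l2normPow, htr, hdiv]
    rw [show ((4:ℂ)).re = (4:ℝ) by norm_num]
    rw [show (4:ℝ) = 2^2 by norm_num, Real.sqrt_sq (by norm_num)]
end

section
/- Every infinite compact Hausdorff space X admits, for every k ∈ ℕ, elements a₀, …, a_{k−1} of the unit ball of C(X) such that ‖aᵢ a_j − a_j‖ = 0 for i > j and ‖aᵢ a_j − a_j‖ = 1 for i < j; i.e., C(X) has the order property witnessed by g(x,y) = ‖xy − y‖. -/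
open Set

/-- `C(X)` for an infinite compact Hausdorff space `X` has the order property witnessed by
`g(x,y) = ‖xy − y‖`: for every `k` there are `a₀, …, a_{k−1}` in the unit ball with
`‖aᵢ a_j − a_j‖ = 0` for `i > j` and `‖aᵢ a_j − a_j‖ = 1` for `i < j`. -/
theorem stmt7 {X : Type*} [TopologicalSpace X] [CompactSpace X] [T2Space X] [Infinite X]
    (k : ℕ) :
    ∃ a : Fin k → C(X, ℂ),
      (∀ i, ‖a i‖ ≤ 1) ∧
      (∀ i j, j < i → ‖a i * a j - a j‖ = 0) ∧
      (∀ i j, i < j → ‖a i * a j - a j‖ = 1) := by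
  classical
  -- distinct points
  let e := Infinite.natEmbedding X
  let p : Fin k → X := fun j => e j
  have hp : Function.Injective p := fun i j h => by
    have := e.injective h
    exact Fin.ext (by exact_mod_cast this)
  -- Urysohn functions
  have hu : ∀ j : Fin k, ∃ u : C(X, ℝ),
      (∀ j', j' ≠ j → u (p j') = 0) ∧ u (p j) = 1 := by
    intro j
    have hs : IsClosed (p '' {j' | j' ≠ j}) :=
      (Set.Finite.image _ (Set.toFinite _)).isClosed
    have ht : IsClosed ({p j} : Set X) := isClosed_singleton
    have hd : Disjoint (p '' {j' | j' ≠ j}) {p j} := by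
      rw [Set.disjoint_singleton_right]
      rintro ⟨j', hj', hj'eq⟩
      exact hj' (hp hj'eq)
    obtain ⟨u, h0, h1, _⟩ := exists_continuous_zero_one_of_isClosed hs ht hd
    exact ⟨u, fun j' hj' => h0 ⟨j', hj', rfl⟩, h1 rfl⟩
  choose u hu0 hu1 using hu
  -- f with f (p m) = -(m : ℝ)
  let f : C(X, ℝ) := ∑ j : Fin k, (-(j : ℝ)) • u j
  have hf : ∀ m : Fin k, f (p m) = -(m : ℝ) := by
    intro m
    have : f (p m) = ∑ j : Fin k, (-(j : ℝ)) * u j (p m) := by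
      simp [f]
    rw [this, Finset.sum_eq_single m]
    · rw [hu1 m]; ring
    · intro j _ hj
      rw [hu0 j m (fun h => hj h.symm)]; ring
    · intro h; exact absurd (Finset.mem_univ m) h
  -- bump functions
  let φ : Fin k → ℝ → ℝ := fun i t => min 1 (max 0 (t + i + 1))
  have hφ0 : ∀ (i : Fin k) (t : ℝ), 0 ≤ φ i t := fun i t => le_min zero_le_one (le_max_left 0 _)
  have hφ1 : ∀ (i : Fin k) (t : ℝ), φ i t ≤ 1 := fun i t => min_le_left _ _
  have hφone : ∀ (i : Fin k) (t : ℝ), -(i : ℝ) ≤ t → φ i t = 1 := by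
    intro i t ht
    have h1 : (1 : ℝ) ≤ t + i + 1 := by linarith
    simp only [φ]
    rw [max_eq_right (by linarith), min_eq_left h1]
  have hφzero : ∀ (i : Fin k) (t : ℝ), t ≤ -((i : ℝ) + 1) → φ i t = 0 := by
    intro i t ht
    simp only [φ]
    rw [max_eq_left (by linarith)]
    simp
  have hφne : ∀ (i : Fin k) (t : ℝ), φ i t ≠ 0 → -((i : ℝ) + 1) < t := by
    intro i t h
    by_contra hc
    exact h (hφzero i t (le_of_not_gt hc))
  -- the functions
  have cont : ∀ i : Fin k, Continuous fun x => ((φ i (f x) : ℝ) : ℂ) := by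
    intro i
    apply Complex.continuous_ofReal.comp
    exact continuous_const.min (continuous_const.max
      ((f.continuous.add continuous_const).add continuous_const))
  let a : Fin k → C(X, ℂ) := fun i => ⟨fun x => ((φ i (f x) : ℝ) : ℂ), cont i⟩
  have ha_norm_pt : ∀ (i : Fin k) (x : X), ‖a i x‖ ≤ 1 := by
    intro i x
    simp only [a, ContinuousMap.coe_mk, Complex.norm_real]
    rw [Real.norm_eq_abs, abs_of_nonneg (hφ0 i (f x))]
    exact hφ1 i (f x)
  refine ⟨a, ?_, ?_, ?_⟩
  · intro i
    exact (ContinuousMap.norm_le _ zero_le_one).mpr (ha_norm_pt i)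
  · intro i j hji
    rw [norm_eq_zero, sub_eq_zero]
    ext x
    simp only [ContinuousMap.mul_apply]
    by_cases h : φ j (f x) = 0
    · simp [a, h]
    · have hlt : -((j : ℝ) + 1) < f x := hφne j (f x) h
      have hij : (j : ℝ) + 1 ≤ (i : ℝ) := by exact_mod_cast hji
      have : φ i (f x) = 1 := hφone i (f x) (by linarith)
      simp [a, this]
  · intro i j hij
    have hle : ‖a i * a j - a j‖ ≤ 1 := by
      apply (ContinuousMap.norm_le _ zero_le_one).mpr
      intro x
      simp only [ContinuousMap.sub_apply, ContinuousMap.mul_apply]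
      calc ‖a i x * a j x - a j x‖ = ‖a i x - 1‖ * ‖a j x‖ := by
            rw [← norm_mul]; ring_nf
      _ ≤ 1 * 1 := by
            apply mul_le_mul _ (ha_norm_pt j x) (norm_nonneg _) zero_le_one
            simp only [a, ContinuousMap.coe_mk]
            rw [← Complex.ofReal_one, ← Complex.ofReal_sub, Complex.norm_real,
              Real.norm_eq_abs, abs_of_nonpos (by linarith [hφ1 i (f x)])]
            linarith [hφ0 i (f x)]
      _ = 1 := one_mul 1
    have hge : (1 : ℝ) ≤ ‖a i * a j - a j‖ := by
      have := ContinuousMap.norm_coe_le_norm (a i * a j - a j) (p j)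
      have hval : (a i * a j - a j) (p j) = -1 := by
        have hai : a i (p j) = 0 := by
          have : φ i (f (p j)) = 0 := by
            apply hφzero
            rw [hf j]
            have : (i : ℝ) + 1 ≤ (j : ℝ) := by exact_mod_cast hij
            linarith
          simp [a, this]
        have haj : a j (p j) = 1 := by
          have : φ j (f (p j)) = 1 := by
            apply hφone
            rw [hf j]
          simp [a, this]
        simp [hai, haj]
      rw [hval] at this
      simpa using this
    linarith
end

section
/- Every maximal abelian self-adjoint subalgebra of an infinite-dimensional C*-algebra is infinite-dimensional. -/
set_option linter.unusedSectionVars false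
set_option maxHeartbeats 1000000

section aux
variable {A : Type*} [NormedRing A] [StarRing A] [CStarRing A] [NormedAlgebra ℂ A]
    [StarModule ℂ A] [CompleteSpace A]

lemma aux_sa_nilpotent_eq_zero {h : A} (hsa : IsSelfAdjoint h) (hn : IsNilpotent h) : h = 0 := by
  obtain ⟨n, hn⟩ := hn
  obtain ⟨k, hk⟩ : ∃ k, n ≤ 2 ^ k := ⟨n, Nat.le_of_lt (Nat.lt_two_pow_self)⟩
  have h2 : h ^ (2 ^ k) = 0 := by
    rw [← Nat.sub_add_cancel hk, pow_add, hn, mul_zero]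
  have hh := hsa.nnnorm_pow_two_pow k
  rw [h2, nnnorm_zero] at hh
  have : ‖h‖₊ = 0 := pow_eq_zero_iff (n := 2 ^ k) (by positivity) |>.mp hh.symm
  simpa using (nnnorm_eq_zero.mp this)

lemma aux_normal_nilpotent_eq_zero {a : A} (hc : Commute (star a) a) (hn : IsNilpotent a) :
    a = 0 := by
  obtain ⟨n, hn⟩ := hn
  have hsa : IsSelfAdjoint (star a * a) := IsSelfAdjoint.star_mul_self a
  have hnil : IsNilpotent (star a * a) := by
    refine ⟨n, ?_⟩
    rw [hc.mul_pow, ← star_pow, hn, star_zero, zero_mul]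
  have h0 : star a * a = 0 := aux_sa_nilpotent_eq_zero hsa hnil
  have : ‖a‖ * ‖a‖ = 0 := by rw [← CStarRing.norm_star_mul_self, h0, norm_zero]
  have : ‖a‖ = 0 := by nlinarith [norm_nonneg a]
  simpa using this

lemma aux_spectrum_idem {p : A} (hp : p * p = p) : spectrum ℂ p ⊆ {0, 1} := by
  intro lam hlam
  by_contra hl
  simp only [Set.mem_insert_iff, Set.mem_singleton_iff] at hl
  push_neg at hl
  obtain ⟨h0, h1⟩ := hl
  apply spectrum.notMem_iff.mpr ?_ hlam
  have h10 : lam - 1 ≠ 0 := sub_ne_zero.mpr h1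
  set μ : ℂ := (lam * (lam - 1))⁻¹ with hμ
  have key : lam * μ = lam⁻¹ + μ := by
    rw [hμ]; field_simp; ring
  have main : (lam • 1 - p) * (lam⁻¹ • 1 + μ • p) = 1 := by
    have expand : (lam • 1 - p) * (lam⁻¹ • 1 + μ • p)
        = (lam*lam⁻¹) • (1:A) + (lam*μ) • p - lam⁻¹ • p - μ • (p*p) := by
      simp only [sub_mul, mul_add, smul_mul_assoc, mul_smul_comm, smul_smul, one_mul, mul_one]
      module
    rw [expand, hp, mul_inv_cancel₀ h0, key, add_smul, one_smul]
    abel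
  have hcomm : Commute (lam • 1 - p) (lam⁻¹ • 1 + μ • p) := by
    have c₁ : Commute p (lam⁻¹ • 1 + μ • p) :=
      Commute.add_right ((Commute.one_right p).smul_right _) ((Commute.refl p).smul_right _)
    exact Commute.sub_left (((Commute.one_left _).smul_left _)) c₁
  refine ⟨⟨algebraMap ℂ A lam - p, lam⁻¹ • 1 + μ • p, ?_, ?_⟩, rfl⟩
  · rw [Algebra.algebraMap_eq_smul_one]; exact main
  · rw [Algebra.algebraMap_eq_smul_one, ← hcomm.eq]; exact main

lemma aux_idem_normal_selfadjoint {p : A} (hp : p * p = p) (hc : Commute (star p) p) :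
    star p = p := by
  letI : CStarAlgebra A := { }
  haveI : IsStarNormal p := ⟨hc⟩
  have hsp := aux_spectrum_idem hp
  have : IsSelfAdjoint p := by
    rw [isSelfAdjoint_iff_isStarNormal_and_quasispectrumRestricts]
    refine ⟨inferInstance, ?_⟩
    refine SpectrumRestricts.of_subset_range_algebraMap (fun x => Complex.ofReal_re x) ?_
    intro lam hlam
    rcases hsp hlam with h | h
    · exact ⟨0, by simp [h]⟩
    · rw [Set.mem_singleton_iff] at h
      exact ⟨1, by simp [h]⟩
  exact this

end aux


/-- A commutative reduced finite-dimensional ℂ-algebra has a complete family of idempotents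
with the scalar property. -/
lemma aux_decomp (R : Type*) [Ring R] [Algebra ℂ R] [FiniteDimensional ℂ R]
    (hcomm : ∀ x y : R, x * y = y * x)
    (hred : ∀ x : R, ∀ n : ℕ, x ^ n = 0 → x = 0) :
    ∃ (n : ℕ) (f : Fin n → R), (∀ i, f i * f i = f i) ∧ (∑ i, f i = 1) ∧
      (∀ (b : R) (i), ∃ c : ℂ, b * f i = c • f i) := by
  classical
  letI : CommRing R := { (inferInstance : Ring R) with mul_comm := hcomm }
  haveI : IsReduced R := ⟨fun x ⟨n, hn⟩ => hred x n hn⟩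
  haveI : IsArtinianRing R := IsArtinianRing.of_finite ℂ R
  haveI : Finite (MaximalSpectrum R) := inferInstance
  letI : Fintype (MaximalSpectrum R) := Fintype.ofFinite _
  set ι := MaximalSpectrum R with hι
  letI e := IsArtinianRing.equivPi R
  have he : ∀ (b : R) (J : ι), e b J = Ideal.Quotient.mk J.asIdeal b := fun _ _ => rfl
  have hsurj : ∀ (I : ι) (q : R ⧸ I.asIdeal), ∃ c : ℂ, algebraMap ℂ _ c = q := by
    intro I q
    haveI : I.asIdeal.IsMaximal := I.isMaximal
    haveI : Module.Finite ℂ (R ⧸ I.asIdeal) :=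
      Module.Finite.of_surjective (Ideal.Quotient.mkₐ ℂ I.asIdeal).toLinearMap
        (Ideal.Quotient.mkₐ_surjective ℂ I.asIdeal)
    haveI : Algebra.IsIntegral ℂ (R ⧸ I.asIdeal) := Algebra.IsIntegral.of_finite ℂ _
    exact IsAlgClosed.algebraMap_bijective_of_isIntegral.2 q
  set f : ι → R := fun I => e.symm (Pi.single I 1) with hf
  have hidem : ∀ I, f I * f I = f I := by
    intro I
    apply e.injective
    rw [map_mul, hf]
    simp only [RingEquiv.apply_symm_apply]
    funext K
    by_cases hK : K = I
    · subst hK; simp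
    · simp [Pi.single_eq_of_ne hK]
  have hsum : ∑ I, f I = 1 := by
    apply e.injective
    rw [map_sum, map_one, hf]
    simp only [AlgEquiv.apply_symm_apply]
    exact Finset.univ_sum_single (1 : ∀ I : MaximalSpectrum R, R ⧸ I.asIdeal)
  have hscalar : ∀ (b : R) (J : ι), ∃ c : ℂ, b * f J = c • f J := by
    intro b J
    obtain ⟨c, hc⟩ := hsurj J (Ideal.Quotient.mk J.asIdeal b)
    refine ⟨c, e.injective ?_⟩
    rw [map_mul, Algebra.smul_def, map_mul, hf]
    simp only [AlgEquiv.apply_symm_apply]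
    funext K
    by_cases hK : K = J
    · subst hK
      simp only [Pi.mul_apply, Pi.single_eq_same, mul_one]
      rw [he, he, ← hc]
      have : Ideal.Quotient.mk K.asIdeal (algebraMap ℂ R c) = algebraMap ℂ (R ⧸ K.asIdeal) c := by
        rw [← Ideal.Quotient.mkₐ_eq_mk ℂ]
        exact (Ideal.Quotient.mkₐ ℂ K.asIdeal).commutes c
      rw [this]
    · simp [Pi.mul_apply, Pi.single_eq_of_ne hK]
  -- reindex by Fin
  obtain ⟨n, ⟨eq⟩⟩ : ∃ n, Nonempty (ι ≃ Fin n) := ⟨Fintype.card ι, ⟨Fintype.equivFin ι⟩⟩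
  refine ⟨n, f ∘ eq.symm, fun i => hidem _, ?_, fun b i => hscalar b _⟩
  rw [← hsum]
  exact (Equiv.sum_comp eq.symm f)

/-- Every maximal abelian self-adjoint subalgebra of an infinite-dimensional C*-algebra
is infinite-dimensional. -/
theorem stmt9 {A : Type*} [NormedRing A] [StarRing A] [CStarRing A] [NormedAlgebra ℂ A]
    [StarModule ℂ A] [CompleteSpace A]
    (hA : ¬ FiniteDimensional ℂ A)
    (B : StarSubalgebra ℂ A)
    (habel : ∀ x ∈ B, ∀ y ∈ B, x * y = y * x)
    (hmax : ∀ C : StarSubalgebra ℂ A, B ≤ C → (∀ x ∈ C, ∀ y ∈ C, x * y = y * x) → C = B) :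
    ¬ FiniteDimensional ℂ B := by
  intro hB
  apply hA
  classical
  -- Step 1: commutant of B is B
  have hsa_mem : ∀ a : A, star a = a → (∀ b ∈ B, b * a = a * b) → a ∈ B := by
    intro a ha hcomm
    set s : Set A := (B : Set A) ∪ {a} with hs
    have hmem : ∀ x ∈ s, ∀ y ∈ s, x * y = y * x := by
      rintro x (hx | hx) y (hy | hy)
      · exact habel x hx y hy
      · rw [Set.mem_singleton_iff] at hy; subst hy; exact (hcomm x hx)
      · rw [Set.mem_singleton_iff] at hx; subst hx; exact (hcomm y hy).symm
      · rw [Set.mem_singleton_iff] at hx hy; subst hx; subst hy; rfl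
    have hstar_s : ∀ y ∈ s, star y ∈ s := by
      rintro y (hy | hy)
      · exact Or.inl (star_mem hy)
      · rw [Set.mem_singleton_iff] at hy; subst hy; exact Or.inr (by simp [ha])
    have hmem_star : ∀ x ∈ s, ∀ y ∈ s, x * star y = star y * x := fun x hx y hy =>
      hmem x hx _ (hstar_s y hy)
    letI := StarAlgebra.adjoinCommRingOfComm ℂ hmem hmem_star
    have hcomm' : ∀ x ∈ StarAlgebra.adjoin ℂ s, ∀ y ∈ StarAlgebra.adjoin ℂ s, x*y=y*x :=
      fun x hx y hy =>
        congrArg Subtype.val (mul_comm (⟨x,hx⟩ : StarAlgebra.adjoin ℂ s) ⟨y,hy⟩)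
    have hBle : B ≤ StarAlgebra.adjoin ℂ s := fun x hx =>
      StarAlgebra.subset_adjoin ℂ s (Or.inl hx)
    have heq := hmax _ hBle hcomm'
    have haa : a ∈ StarAlgebra.adjoin ℂ s := StarAlgebra.subset_adjoin ℂ s (Or.inr rfl)
    rw [heq] at haa; exact haa
  have hcent : ∀ a : A, (∀ b ∈ B, b * a = a * b) → a ∈ B := by
    intro a hcomm
    have hstar : ∀ b ∈ B, b * star a = star a * b := by
      intro b hb
      have h1 := congrArg star (hcomm (star b) (star_mem hb))
      simp only [star_mul, star_star] at h1
      exact h1.symm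
    have h1 : a + star a ∈ B := by
      apply hsa_mem _ (by simp [star_add, add_comm])
      intro b hb
      rw [mul_add, add_mul, hcomm b hb, hstar b hb]
    have h2 : Complex.I • (a - star a) ∈ B := by
      apply hsa_mem
      · rw [star_smul, star_sub, star_star, Complex.star_def, Complex.conj_I,
          neg_smul, smul_sub, smul_sub, neg_sub]
      · intro b hb
        rw [mul_smul_comm, smul_mul_assoc, mul_sub, sub_mul, hcomm b hb, hstar b hb]
    have hrepr : a = (2⁻¹ : ℂ) • ((a + star a) + (-Complex.I) • (Complex.I • (a - star a))) := by
      rw [smul_smul, neg_mul, Complex.I_mul_I, neg_neg, one_smul]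
      module
    rw [hrepr]
    exact B.smul_mem (B.add_mem h1 (B.smul_mem h2 _)) _
  -- Step 2: decompose B
  have hred : ∀ x : ↥B, ∀ n : ℕ, x ^ n = 0 → x = 0 := by
    intro x n hn
    have hxA : ((x : A)) ^ n = 0 := by
      have := congrArg (Subtype.val) hn
      push_cast at this
      exact_mod_cast this
    have hnormal : Commute (star (x:A)) (x:A) := habel _ (star_mem x.2) _ x.2
    have := aux_normal_nilpotent_eq_zero hnormal ⟨n, hxA⟩
    exact Subtype.ext this
  obtain ⟨n, f, hidem, hsum, hscalar⟩ := aux_decomp ↥B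
    (fun x y => Subtype.ext (habel x.1 x.2 y.1 y.2)) hred
  -- push to A
  set p : Fin n → A := fun I => (f I : A) with hp
  have hpB : ∀ I, p I ∈ B := fun I => (f I).2
  have hpidem : ∀ I, p I * p I = p I := fun I => congrArg Subtype.val (hidem I)
  have hpsum : ∑ I, p I = 1 := by
    have h1 := congrArg (B.subtype) hsum
    rw [map_sum, map_one] at h1
    exact h1
  have hpscalar : ∀ b ∈ B, ∀ J, ∃ c : ℂ, b * p J = c • p J ∧ p J * b = c • p J := by
    intro b hb J
    obtain ⟨c, hc⟩ := hscalar ⟨b, hb⟩ J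
    have h1 : b * p J = c • p J := by
      have h2 := congrArg (B.subtype) hc
      rw [map_mul, map_smul] at h2
      exact h2
    exact ⟨c, h1, by rw [← h1]; exact habel _ (hpB J) b hb⟩
  have hpstar : ∀ I, star (p I) = p I := fun I =>
    aux_idem_normal_selfadjoint (hpidem I) (habel _ (star_mem (hpB I)) _ (hpB I))
  -- corners
  have hdiag : ∀ (I : Fin n) (x : A), p I * x * p I ∈ B := by
    intro I x
    apply hcent
    intro b hb
    obtain ⟨c, hc1, hc2⟩ := hpscalar b hb I
    have l1 : b * (p I * x * p I) = c • (p I * x * p I) := by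
      rw [← mul_assoc, ← mul_assoc, hc1, smul_mul_assoc, smul_mul_assoc]
    have l2 : (p I * x * p I) * b = c • (p I * x * p I) := by
      rw [mul_assoc, hc2, mul_smul_comm]
    rw [l1, l2]
  have hcorner : ∀ (J : Fin n) (z : A), z ∈ B → p J * z * p J = z → ∃ c : ℂ, z = c • p J := by
    intro J z hz hzz
    obtain ⟨c, hc1, _⟩ := hpscalar z hz J
    have hzp : z * p J = z := by
      conv_lhs => rw [← hzz]
      rw [mul_assoc, mul_assoc, hpidem J, ← mul_assoc, hzz]
    exact ⟨c, by rw [← hzp]; exact hc1⟩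
  -- submodules
  set V : Fin n → Fin n → Submodule ℂ A := fun I J =>
    LinearMap.range ((LinearMap.mulLeft ℂ (p I)).comp (LinearMap.mulRight ℂ (p J))) with hV
  have hVmem : ∀ (I J) (x : A), p I * x * p J ∈ V I J := by
    intro I J x
    exact ⟨x, by
      simp only [LinearMap.coe_comp, Function.comp_apply, LinearMap.mulLeft_apply,
        LinearMap.mulRight_apply, mul_assoc]⟩
  have hVform : ∀ (I J) (x : A), x ∈ V I J → p I * x = x ∧ x * p J = x := by
    rintro I J x ⟨y, rfl⟩
    simp only [LinearMap.coe_comp, Function.comp_apply, LinearMap.mulLeft_apply,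
      LinearMap.mulRight_apply]
    constructor
    · rw [← mul_assoc, hpidem I]
    · rw [mul_assoc, mul_assoc, hpidem J]
  haveI hVfd : ∀ I J, FiniteDimensional ℂ (V I J) := by
    intro I J
    by_cases hIJ : I = J
    · subst hIJ
      haveI : FiniteDimensional ℂ (Subalgebra.toSubmodule B.toSubalgebra) := hB
      apply Submodule.finiteDimensional_of_le (S₂ := Subalgebra.toSubmodule B.toSubalgebra)
      rintro x ⟨y, rfl⟩
      simp only [LinearMap.coe_comp, Function.comp_apply, LinearMap.mulLeft_apply,
        LinearMap.mulRight_apply]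
      show p I * (y * p I) ∈ B
      rw [← mul_assoc]
      exact hdiag I y
    · by_cases hbot : V I J = ⊥
      · rw [hbot]; infer_instance
      · obtain ⟨x, hxV, hx0⟩ := Submodule.exists_mem_ne_zero_of_ne_bot hbot
        have hxI := (hVform I J x hxV).1
        have hxJ := (hVform I J x hxV).2
        have hxstar_l : p J * star x = star x := by
          rw [← hpstar J, ← star_mul, hxJ]
        have hxstar_r : star x * p I = star x := by
          rw [← hpstar I, ← star_mul, hxI]
        have hwB : x * star x ∈ B := by
          have : p I * (x * star x) * p I = x * star x := by
            rw [← mul_assoc, hxI, mul_assoc, hxstar_r]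
          rw [← this]; exact hdiag I _
        obtain ⟨a, haw⟩ := hcorner I (x * star x) hwB
          (by rw [← mul_assoc, hxI, mul_assoc, hxstar_r])
        have ha0 : a ≠ 0 := by
          intro h
          rw [h, zero_smul] at haw
          apply hx0
          have h1 : ‖x‖ * ‖x‖ = 0 := by rw [← CStarRing.norm_self_mul_star, haw, norm_zero]
          have : ‖x‖ = 0 := by nlinarith [norm_nonneg x]
          simpa using this
        have hsub : V I J ≤ Submodule.span ℂ {x} := by
          intro y hyV
          have hyI := (hVform I J y hyV).1
          have hzB : star x * y ∈ B := by
            have hform : p J * (star x * y) * p J = star x * y := by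
              rw [← mul_assoc, hxstar_l, mul_assoc, (hVform I J y hyV).2]
            rw [← hform]; exact hdiag J _
          obtain ⟨c, hcz⟩ := hcorner J (star x * y) hzB
            (by rw [← mul_assoc, hxstar_l, mul_assoc, (hVform I J y hyV).2])
          have key : a • y = c • x := by
            calc a • y = (a • p I) * y := by rw [smul_mul_assoc, hyI]
            _ = (x * star x) * y := by rw [haw]
            _ = x * (star x * y) := by rw [mul_assoc]
            _ = x * (c • p J) := by rw [hcz]
            _ = c • (x * p J) := by rw [mul_smul_comm]
            _ = c • x := by rw [hxJ]
          rw [Submodule.mem_span_singleton]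
          refine ⟨a⁻¹ * c, ?_⟩
          rw [mul_smul, ← key, smul_smul, inv_mul_cancel₀ ha0, one_smul]
        exact Submodule.finiteDimensional_of_le hsub
  -- conclusion
  have htop : (⊤ : Submodule ℂ A) ≤ ⨆ I, ⨆ J, V I J := by
    intro x _
    have hx : x = ∑ I, ∑ J, p I * x * p J := by
      calc x = 1 * x * 1 := by simp
      _ = (∑ I, p I) * x * (∑ J, p J) := by rw [hpsum]
      _ = ∑ I, ∑ J, p I * x * p J := by
          rw [Finset.sum_mul, Finset.sum_mul]
          congr 1
          funext I
          rw [Finset.mul_sum]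
    rw [hx]
    apply Submodule.sum_mem
    intro I _
    apply Submodule.sum_mem
    intro J _
    exact Submodule.mem_iSup_of_mem I (Submodule.mem_iSup_of_mem J (hVmem I J x))
  haveI hfd2 : FiniteDimensional ℂ (⨆ I, ⨆ J, V I J : Submodule ℂ A) := by
    haveI : ∀ I, FiniteDimensional ℂ (⨆ J, V I J : Submodule ℂ A) := fun I =>
      Submodule.finiteDimensional_iSup _
    exact Submodule.finiteDimensional_iSup _
  have heq : (⨆ I, ⨆ J, V I J : Submodule ℂ A) = ⊤ := eq_top_iff.mpr htop
  rw [heq] at hfd2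
  exact Submodule.topEquiv.finiteDimensional
end

section
/- Let (B, ν) be a probability measure algebra containing a stochastically independent family (x_s)_{s ∈ κ^{<ℕ}} indexed by finite sequences of ordinals below κ, with ν(x_s) = 1/2 for all s and ν(x_s ∧ x_t) = 1/4 for s ≠ t. For f : ℕ → κ, let x_f in the ultrapower B^U (U a nonprincipal ultrafilter on ℕ) be represented by the sequence (x_{f↾n})_{n∈ℕ}. Then for f ≠ g, the measure of x_f ∧ x_g in B^U equals 1/4, while each x_f has measure 1/2; in particular the map f ↦ x_f is injective, yielding a family of κ^{ℵ₀} elements of B^U that are pairwise 'independent' in the sense that ν(x_f ∧ x_g) = ν(x_f)·ν(x_g). -/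
open Filter

/-- Given a stochastically independent family `(x_s)` in a probability measure algebra
`(B, ν)` indexed by finite sequences from `κ` (`ν(x_s) = 1/2`, `ν(x_s ⊓ x_t) = 1/4` for
`s ≠ t`), the elements `x_f` of the metric ultrapower `B^U` represented by
`(x_{f↾n})_n`, for `f : ℕ → κ`, satisfy: each `x_f` has measure `1/2`, for `f ≠ g` the
measure of `x_f ⊓ x_g` is `1/4 = ν(x_f)·ν(x_g)`, and `f ↦ x_f` is injective (the distance
`ν(x_{f↾n} Δ x_{g↾n})` does not tend to `0` along `U`). -/
theorem stmt13 {B : Type*} [BooleanAlgebra B] (ν : B → ℝ)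
    (hmono : Monotone ν) (hν1 : ν ⊤ = 1) (hν0 : ν ⊥ = 0)
    (hadd : ∀ a b : B, Disjoint a b → ν (a ⊔ b) = ν a + ν b)
    (hpos : ∀ a : B, a ≠ ⊥ → 0 < ν a)
    {κ : Type*} (x : List κ → B)
    (hhalf : ∀ s, ν (x s) = 1/2)
    (hindep : ∀ s t, s ≠ t → ν (x s ⊓ x t) = 1/4)
    (U : Ultrafilter ℕ) (hU : (U : Filter ℕ) ≤ Filter.cofinite) :
    (∀ f : ℕ → κ, Tendsto (fun n => ν (x (List.ofFn (fun i : Fin n => f i))))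
        (U : Filter ℕ) (nhds (1/2))) ∧
    (∀ f g : ℕ → κ, f ≠ g →
      Tendsto (fun n => ν (x (List.ofFn (fun i : Fin n => f i)) ⊓
          x (List.ofFn (fun i : Fin n => g i)))) (U : Filter ℕ) (nhds (1/4))) ∧
    (∀ f g : ℕ → κ, f ≠ g →
      ¬ Tendsto (fun n => ν (symmDiff (x (List.ofFn (fun i : Fin n => f i)))
          (x (List.ofFn (fun i : Fin n => g i))))) (U : Filter ℕ) (nhds 0)) := by

  have hne : ∀ (f g : ℕ → κ), f ≠ g → ∀ᶠ n in (U : Filter ℕ),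
      List.ofFn (fun i : Fin n => f i) ≠ List.ofFn (fun i : Fin n => g i) := by
    intro f g hfg
    obtain ⟨k, hk⟩ := Function.ne_iff.mp hfg
    apply hU
    apply Filter.eventually_cofinite.mpr
    apply Set.Finite.subset (Set.finite_Iic k)
    intro n hn
    simp only [Set.mem_setOf_eq, not_not] at hn
    by_contra hkn
    simp only [Set.mem_Iic, not_le] at hkn
    apply hk
    have := congrArg (fun l => l[k]?) hn
    simpa [List.getElem?_ofFn, hkn] using this
  have hsd : ∀ a b : B, ν (symmDiff a b) = ν a + ν b - 2 * ν (a ⊓ b) := by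
    intro a b
    have hd : ∀ u v : B, Disjoint (u ⊓ v) (u \ v) :=
      fun u v => disjoint_sdiff_self_right.mono_left inf_le_right
    have h1 : ν a = ν (a ⊓ b) + ν (a \ b) := by
      rw [← hadd _ _ (hd a b), sup_inf_sdiff]
    have h2 : ν b = ν (a ⊓ b) + ν (b \ a) := by
      rw [inf_comm, ← hadd _ _ (hd b a), sup_inf_sdiff]
    have h3 : ν (symmDiff a b) = ν (a \ b) + ν (b \ a) := by
      rw [symmDiff_def, hadd _ _ (disjoint_sdiff_sdiff)]
    linarith
  refine ⟨fun f => ?_, fun f g hfg => ?_, fun f g hfg => ?_⟩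
  · have : (fun n => ν (x (List.ofFn (fun i : Fin n => f i)))) = fun _ => (1:ℝ)/2 := by
      funext n; exact hhalf _
    rw [this]; exact tendsto_const_nhds
  · have h := (hne f g hfg).mono (fun n hn => hindep _ _ hn)
    exact Tendsto.congr' (h.mono fun n hn => hn.symm) tendsto_const_nhds
  · intro htend
    have h : ∀ᶠ n in (U : Filter ℕ),
        ν (symmDiff (x (List.ofFn (fun i : Fin n => f i)))
          (x (List.ofFn (fun i : Fin n => g i)))) = 1/2 := by
      refine (hne f g hfg).mono (fun n hn => ?_)
      rw [hsd, hhalf, hhalf, hindep _ _ hn]; norm_num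
    have : Tendsto (fun _ : ℕ => (1:ℝ)/2) (U : Filter ℕ) (nhds 0) :=
      htend.congr' h
    have := tendsto_nhds_unique this tendsto_const_nhds
    norm_num at this
end

section
/- Let (M, τ) be a tracial von Neumann algebra, U a free ultrafilter on ℕ, and suppose the center-valued trace T : M → Z(M) satisfies ‖x − T(x)‖₂ ≤ sup_{‖y‖≤1} ‖[x,y]‖₂ for all x ∈ M. Then the center of the ultrapower equals the ultrapower of the center: Z(M^U) = Z(M)^U (as subalgebras of M^U). -/
open Filter

/-- If the center-valued trace `T` of a tracial von Neumann algebra `(M, τ)` satisfies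
`‖x − T(x)‖₂ ≤ sup_{‖y‖≤1} ‖[x,y]‖₂`, then the center of the tracial ultrapower equals the
ultrapower of the center. In terms of representing sequences: a bounded sequence `(x_i)`
is central in `M^U` (commutes asymptotically with every bounded sequence) iff it agrees
along `U` with a sequence of central elements of `M`. -/
theorem stmt15 {M : Type*} [NormedRing M] [StarRing M] [CStarRing M] [NormedAlgebra ℂ M]
    [StarModule ℂ M] [CompleteSpace M]
    (τ : M →ₗ[ℂ] ℂ)
    (htr : ∀ a b : M, τ (a * b) = τ (b * a))
    (hpos : ∀ a : M, 0 ≤ (τ (star a * a)).re)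
    (hfaith : ∀ a : M, τ (star a * a) = 0 → a = 0) (hτ1 : τ 1 = 1)
    (n2 : M → ℝ) (hn2 : ∀ a, n2 a = Real.sqrt ((τ (star a * a)).re))
    (T : M → M)
    (hTcentral : ∀ x : M, ∀ y : M, T x * y = y * T x)
    (hTbound : ∀ x : M, ‖T x‖ ≤ ‖x‖)
    (hTineq : ∀ x : M,
      n2 (x - T x) ≤ sSup {r : ℝ | ∃ y : M, ‖y‖ ≤ 1 ∧ r = n2 (x * y - y * x)})
    (U : Ultrafilter ℕ) (hU : (U : Filter ℕ) ≤ Filter.cofinite) :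
    ∀ x : ℕ → M, (∀ i, ‖x i‖ ≤ 1) →
      ((∀ y : ℕ → M, (∀ i, ‖y i‖ ≤ 1) →
          Tendsto (fun i => n2 (x i * y i - y i * x i)) (U : Filter ℕ) (nhds 0)) ↔
        ∃ c : ℕ → M, (∀ i, ∀ a : M, c i * a = a * c i) ∧ (∀ i, ‖c i‖ ≤ 1) ∧
          Tendsto (fun i => n2 (x i - c i)) (U : Filter ℕ) (nhds 0)) := by
  classical
  -- notation: Q a = τ(a* a).re
  set Q : M → ℝ := fun a => (τ (star a * a)).re with hQdef
  have hQnonneg : ∀ a : M, 0 ≤ Q a := hpos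
  have hn2Q : ∀ a : M, n2 a = Real.sqrt (Q a) := hn2
  have hn2_nonneg : ∀ a : M, 0 ≤ n2 a := fun a => by
    rw [hn2Q]; exact Real.sqrt_nonneg _
  have hn2_zero : n2 (0 : M) = 0 := by
    rw [hn2Q]; simp [hQdef]
  have hn2_neg : ∀ a : M, n2 (-a) = n2 a := fun a => by
    rw [hn2Q, hn2Q]; simp [hQdef]
  have hn2_star : ∀ a : M, n2 (star a) = n2 a := fun a => by
    rw [hn2Q, hn2Q]; simp only [hQdef, star_star]; rw [htr]
  -- real scalar action facts
  have hre_smul : ∀ (r : ℝ) (z : M), (τ ((r : ℂ) • z)).re = r * (τ z).re := by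
    intro r z
    rw [map_smul, smul_eq_mul, Complex.re_ofReal_mul]
  -- expansion of Q(u + t • v) for real t
  have hexpand : ∀ (u v : M) (t : ℝ),
      Q (u + (t : ℂ) • v) =
        Q u + t * ((τ (star u * v)).re + (τ (star v * u)).re) + t * t * Q v := by
    intro u v t
    have h1 : star (u + (t : ℂ) • v) * (u + (t : ℂ) • v) =
        star u * u + (t : ℂ) • (star u * v) + (t : ℂ) • (star v * u)
          + ((t : ℂ) * (t : ℂ)) • (star v * v) := by
      rw [star_add, star_smul, Complex.star_def, Complex.conj_ofReal]
      rw [add_mul, mul_add, mul_add, smul_mul_assoc, smul_mul_assoc,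
        mul_smul_comm, mul_smul_comm, smul_smul]
      abel
    simp only [hQdef]
    rw [h1, map_add, map_add, map_add, map_smul, map_smul, map_smul]
    simp only [smul_eq_mul, Complex.add_re, Complex.mul_re, Complex.ofReal_re,
      Complex.ofReal_im, Complex.mul_im]
    ring
  -- triangle inequality for n2
  have htri : ∀ u v : M, n2 (u + v) ≤ n2 u + n2 v := by
    intro u v
    set s : ℝ := (τ (star u * v)).re + (τ (star v * u)).re with hs
    have hquad : ∀ t : ℝ, 0 ≤ Q v * (t * t) + s * t + Q u := by
      intro t
      have := hQnonneg (u + (t : ℂ) • v)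
      rw [hexpand u v t, ← hs] at this
      nlinarith [this]
    have hdisc := discrim_le_zero hquad
    rw [discrim] at hdisc
    have h4 : s ^ 2 ≤ 4 * Q v * Q u := by linarith
    have hsle : s ≤ 2 * Real.sqrt (Q u) * Real.sqrt (Q v) := by
      have h5 : s ≤ |s| := le_abs_self s
      have h6 : |s| = Real.sqrt (s ^ 2) := (Real.sqrt_sq_eq_abs s).symm
      have h7 : Real.sqrt (s ^ 2) ≤ Real.sqrt (4 * Q v * Q u) := Real.sqrt_le_sqrt h4
      have h8 : Real.sqrt (4 * Q v * Q u) = 2 * Real.sqrt (Q u) * Real.sqrt (Q v) := by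
        rw [show (4 : ℝ) * Q v * Q u = (2 : ℝ) ^ 2 * (Q u * Q v) by ring,
          Real.sqrt_mul (by positivity), Real.sqrt_sq (by norm_num : (0:ℝ) ≤ 2),
          Real.sqrt_mul (hQnonneg u)]
        ring
      calc s ≤ |s| := h5
        _ = Real.sqrt (s ^ 2) := h6
        _ ≤ Real.sqrt (4 * Q v * Q u) := h7
        _ = 2 * Real.sqrt (Q u) * Real.sqrt (Q v) := h8
    have hQuv : Q (u + v) ≤ (Real.sqrt (Q u) + Real.sqrt (Q v)) ^ 2 := by
      have h9 := hexpand u v 1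
      simp only [Complex.ofReal_one, one_smul, one_mul] at h9
      have h10 : Real.sqrt (Q u) ^ 2 = Q u := Real.sq_sqrt (hQnonneg u)
      have h11 : Real.sqrt (Q v) ^ 2 = Q v := Real.sq_sqrt (hQnonneg v)
      rw [h9]
      nlinarith [hsle]
    rw [hn2Q, hn2Q, hn2Q]
    calc Real.sqrt (Q (u + v)) ≤ Real.sqrt ((Real.sqrt (Q u) + Real.sqrt (Q v)) ^ 2) :=
          Real.sqrt_le_sqrt hQuv
      _ = Real.sqrt (Q u) + Real.sqrt (Q v) := Real.sqrt_sq (by positivity)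
  -- C*-algebra order structure: a* a ≤ ‖a‖² so a* a + c* c = ‖a‖² for some c
  letI : CStarAlgebra M := ⟨⟩
  letI : PartialOrder M := CStarAlgebra.spectralOrder M
  letI : StarOrderedRing M := CStarAlgebra.spectralOrderedRing M
  have hsqrt : ∀ a : M, ∃ c : M, star a * a + star c * c = algebraMap ℝ M (‖a‖ ^ 2) := by
    intro a
    have h1 : star a * a ≤ algebraMap ℝ M (‖a‖ ^ 2) :=
      CStarAlgebra.star_mul_le_algebraMap_norm_sq
    have hd : (0 : M) ≤ algebraMap ℝ M (‖a‖ ^ 2) - star a * a := sub_nonneg.mpr h1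
    refine ⟨CFC.sqrt (algebraMap ℝ M (‖a‖ ^ 2) - star a * a), ?_⟩
    rw [(IsSelfAdjoint.of_nonneg (R := M) (CFC.sqrt_nonneg (algebraMap ℝ M (‖a‖ ^ 2) - star a * a))).star_eq,
      CFC.sqrt_mul_sqrt_self _ hd]
    abel
  -- n2 (a * b) ≤ ‖a‖ * n2 b
  have hQmul : ∀ a b : M, Q (a * b) ≤ ‖a‖ ^ 2 * Q b := by
    intro a b
    obtain ⟨c, hc⟩ := hsqrt a
    have haa : star a * a = algebraMap ℝ M (‖a‖ ^ 2) - star c * c := by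
      rw [← hc]; abel
    have hexp : star (a * b) * (a * b)
        = (‖a‖ ^ 2 : ℝ) • (star b * b) - star (c * b) * (c * b) := by
      rw [star_mul, star_mul, mul_assoc, ← mul_assoc (star a) a b, haa,
        Algebra.algebraMap_eq_smul_one]
      rw [sub_mul, smul_mul_assoc, one_mul, mul_sub, mul_smul_comm]
      rw [mul_assoc, mul_assoc]
    have hcb := hQnonneg (c * b)
    simp only [hQdef] at hcb ⊢
    rw [hexp, map_sub]
    rw [← Complex.coe_smul, Complex.sub_re, hre_smul]
    linarith
  have hmul_left : ∀ a b : M, n2 (a * b) ≤ ‖a‖ * n2 b := by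
    intro a b
    rw [hn2Q, hn2Q]
    calc Real.sqrt (Q (a * b)) ≤ Real.sqrt (‖a‖ ^ 2 * Q b) := Real.sqrt_le_sqrt (hQmul a b)
      _ = ‖a‖ * Real.sqrt (Q b) := by
          rw [Real.sqrt_mul (sq_nonneg _), Real.sqrt_sq (norm_nonneg a)]
  have hmul_right : ∀ a b : M, n2 (a * b) ≤ n2 a * ‖b‖ := by
    intro a b
    have : n2 (a * b) = n2 (star b * star a) := by
      rw [← star_mul, hn2_star]
    rw [this]
    calc n2 (star b * star a) ≤ ‖star b‖ * n2 (star a) := hmul_left _ _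
      _ = n2 a * ‖b‖ := by rw [norm_star, hn2_star]; ring
  -- main statement
  intro x hx
  constructor
  · -- forward: use c i = T (x i)
    intro hcentral
    have key : ∀ i : ℕ, ∃ y : M, ‖y‖ ≤ 1 ∧
        n2 (x i - T (x i)) ≤ n2 (x i * y - y * x i) + 1 / ((i : ℝ) + 1) := by
      intro i
      have hipos : (0 : ℝ) < 1 / ((i : ℝ) + 1) := by positivity
      set S : Set ℝ := {r : ℝ | ∃ y : M, ‖y‖ ≤ 1 ∧ r = n2 (x i * y - y * x i)} with hS
      by_cases hb : BddAbove S
      · have hne : S.Nonempty := ⟨n2 (x i * 0 - 0 * x i), 0, by simp, rfl⟩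
        have hlt : sSup S - 1 / ((i : ℝ) + 1) < sSup S := by linarith
        obtain ⟨r, hrS, hr⟩ := exists_lt_of_lt_csSup hne hlt
        obtain ⟨y, hy1, rfl⟩ := hrS
        refine ⟨y, hy1, ?_⟩
        have := hTineq (x i)
        rw [← hS] at this
        linarith
      · have hz : sSup S = 0 := Real.sSup_of_not_bddAbove hb
        refine ⟨0, by simp, ?_⟩
        have h1 := hTineq (x i)
        rw [← hS, hz] at h1
        have h2 : n2 (x i * 0 - 0 * x i) = 0 := by simpa using hn2_zero
        linarith
    choose y hy1 hy2 using key
    refine ⟨fun i => T (x i), fun i => hTcentral (x i), fun i => (hTbound (x i)).trans (hx i), ?_⟩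
    have hyT := hcentral y hy1
    have hone : Tendsto (fun i : ℕ => 1 / ((i : ℝ) + 1)) (U : Filter ℕ) (nhds 0) :=
      tendsto_one_div_add_atTop_nhds_zero_nat.mono_left (hU.trans Nat.cofinite_eq_atTop.le)
    have hg : Tendsto (fun i => n2 (x i * y i - y i * x i) + 1 / ((i : ℝ) + 1))
        (U : Filter ℕ) (nhds 0) := by
      simpa using hyT.add hone
    exact squeeze_zero (fun i => hn2_nonneg _) hy2 hg
  · -- backward
    rintro ⟨c, hcen, hcb, hct⟩ y hy
    have hbound : ∀ i, n2 (x i * y i - y i * x i) ≤ 2 * n2 (x i - c i) := by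
      intro i
      have hcy : c i * y i = y i * c i := hcen i (y i)
      have hid : (x i - c i) * y i - y i * (x i - c i) = x i * y i - y i * x i := by
        rw [sub_mul, mul_sub, hcy]; abel
      calc n2 (x i * y i - y i * x i)
          = n2 ((x i - c i) * y i + -(y i * (x i - c i))) := by rw [← hid, sub_eq_add_neg]
        _ ≤ n2 ((x i - c i) * y i) + n2 (-(y i * (x i - c i))) := htri _ _
        _ = n2 ((x i - c i) * y i) + n2 (y i * (x i - c i)) := by rw [hn2_neg]
        _ ≤ n2 (x i - c i) * ‖y i‖ + ‖y i‖ * n2 (x i - c i) := by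
            exact add_le_add (hmul_right _ _) (hmul_left _ _)
        _ ≤ 2 * n2 (x i - c i) := by
            have h1 := hn2_nonneg (x i - c i)
            have h2 := hy i
            have h3 := norm_nonneg (y i)
            nlinarith
    have h2 : Tendsto (fun i => 2 * n2 (x i - c i)) (U : Filter ℕ) (nhds 0) := by
      simpa using hct.const_mul 2
    exact squeeze_zero (fun i => hn2_nonneg _) hbound h2
end

section
/- Let U be a nonprincipal ultrafilter on ℕ and κ(U) the coinitiality of ℕ^↗ℕ/U (the minimal cardinality of X ⊆ ℕ^↗ℕ such that for every g ∈ ℕ^↗ℕ there is f ∈ X with {n : f(n) ≤ g(n)} ∈ U). Then κ(U) is uncountable: no countable X ⊆ ℕ^↗ℕ is coinitial in ℕ^↗ℕ/U. -/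
open Filter

private def stmt18N (b : ℕ → ℕ) : ℕ → ℕ
  | 0 => 0
  | k+1 => max (stmt18N b k + 1) (b (k+1))

/-- `κ(U)` is uncountable for every nonprincipal ultrafilter `U` on `ℕ`: no countable
family in `ℕ^↗ℕ` (nondecreasing functions tending to `∞`) is coinitial in `ℕ^↗ℕ/U`. -/
theorem stmt18 (U : Ultrafilter ℕ) (hU : (U : Filter ℕ) ≤ Filter.cofinite)
    (f : ℕ → (ℕ → ℕ))
    (hmono : ∀ k, Monotone (f k)) (hinf : ∀ k, Tendsto (f k) atTop atTop) :
    ∃ g : ℕ → ℕ, Monotone g ∧ Tendsto g atTop atTop ∧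
      ∀ k, {n | f k n ≤ g n} ∉ U := by
  classical
  -- for each m, a bound b m beyond which all f j, j ≤ m, exceed m
  have hex : ∀ m : ℕ, ∃ b : ℕ, ∀ j ≤ m, ∀ n, b ≤ n → m + 1 ≤ f j n := by
    intro m
    have H : ∀ᶠ n in atTop, ∀ j ∈ Finset.range (m+1), m + 1 ≤ f j n := by
      rw [Filter.eventually_all_finset]
      intro j _
      exact (hinf j).eventually_ge_atTop (m+1)
    rcases eventually_atTop.1 H with ⟨b, hb⟩
    exact ⟨b, fun j hj n hn => hb n hn j (Finset.mem_range.2 (Nat.lt_succ_of_le hj))⟩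
  choose b hb using hex
  -- a strictly increasing sequence N
  set N : ℕ → ℕ := stmt18N b with hNdef
  have hNsucc : ∀ k, N (k+1) = max (N k + 1) (b (k+1)) := fun k => rfl
  have hNlt : ∀ k, N k < N (k+1) := by
    intro k; rw [hNsucc]; exact lt_of_lt_of_le (Nat.lt_succ_self _) (le_max_left _ _)
  have hNmono : StrictMono N := strictMono_nat_of_lt_succ hNlt
  have hNle : ∀ k, k ≤ N k := fun k => by
    induction k with
    | zero => exact Nat.zero_le _
    | succ k ih => exact Nat.succ_le_of_lt (lt_of_le_of_lt ih (hNlt k))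
  have hbN : ∀ k, b (k+1) ≤ N (k+1) := fun k => by rw [hNsucc]; exact le_max_right _ _
  -- key: for n ≥ N (m+1) and j ≤ m+1, f j n ≥ m+2
  have hkey : ∀ m j n, j ≤ m + 1 → N (m+1) ≤ n → m + 2 ≤ f j n := by
    intro m j n hj hn
    exact hb (m+1) j hj n (le_trans (hbN m) hn)
  set g : ℕ → ℕ := fun n => @Nat.findGreatest (fun k => N k ≤ n) (fun k => Nat.decLe _ _) n with hg
  have hgmono : Monotone g := by
    intro a c hac
    exact Nat.findGreatest_mono (P := fun k => N k ≤ a) (Q := fun k => N k ≤ c) (fun k hk => le_trans hk hac) hac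
  have hgN : ∀ k, k ≤ g (N k) := by
    intro k
    exact Nat.le_findGreatest (P := fun j => N j ≤ N k) (hNle k) (le_refl (N k))
  have hgtop : Tendsto g atTop atTop :=
    tendsto_atTop_atTop_of_monotone hgmono (fun B => ⟨N B, hgN B⟩)
  refine ⟨g, hgmono, hgtop, ?_⟩
  intro k hmem
  -- show {n | g n < f k n} ∈ U
  have hlt : {n | g n < f k n} ∈ U := by
    apply hU
    rw [Nat.cofinite_eq_atTop]
    filter_upwards [Filter.mem_atTop (N (k+1))] with n hn
    -- g n ≥ k+1, and N (g n) ≤ n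
    have h1 : k + 1 ≤ g n := Nat.le_findGreatest (P := fun j => N j ≤ n) (le_trans (hNle _) hn) hn
    have h2 : N (g n) ≤ n := Nat.findGreatest_spec (P := fun j => N j ≤ n) (m := k+1) (le_trans (hNle _) hn) hn
    obtain ⟨m, hm⟩ : ∃ m, g n = m + 1 := ⟨g n - 1, by omega⟩
    have := hkey m k n (by omega) (hm ▸ h2)
    omega
  have : {n | f k n ≤ g n} ∩ {n | g n < f k n} ∈ U := U.toFilter.inter_sets hmem hlt
  rw [show {n | f k n ≤ g n} ∩ {n | g n < f k n} = ∅ by ext n; simp only [Set.mem_inter_iff, Set.mem_setOf_eq, Set.mem_empty_iff_false, iff_false]; omega] at this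
  exact U.toFilter.empty_notMem this
end
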